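/- (Limits of fixed-state thermal channels are thermal.) Let (φ_R^z)_{z>0} be a family of full-rank density matrices on ℂ^{d_R} with φ_R := lim_{z→0} φ_R^z, and suppose the corresponding thermal channels with respect to φ_R^z converge: T := lim_{z→0} T^{(φ_R^z)}. Then T is a thermal channel with respect to φ_R, i.e., T is an optimizer of the problem: maximize S(B|R)_{(N⊗id_R)(φ_R^{1/2} Φ_{A:R} φ_R^{1/2})} over quantum channels N_{A→B} subject to tr[C^j J(N)] = q_j for all j. -/

import Mathlib

open Matrix BigOperators MeasureTheory
open scoped Kronecker ComplexOrder

noncomputable section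

namespace ThermalChannel

/-- Square complex matrices of size `d`. -/
abbrev Mat (d : ℕ) := Matrix (Fin d) (Fin d) ℂ

/-- A density matrix: positive semidefinite with unit trace. -/
def IsDensity {ι : Type*} [Fintype ι] (ρ : Matrix ι ι ℂ) : Prop :=
  ρ.PosSemidef ∧ ρ.trace = 1

/-- The map `L ⊗ id_R` applied to a matrix on `A × R`. -/
def extendId {A B R : Type*} [Fintype A] [Fintype B] [Fintype R]
    (L : Matrix A A ℂ →ₗ[ℂ] Matrix B B ℂ)
    (M : Matrix (A × R) (A × R) ℂ) : Matrix (B × R) (B × R) ℂ :=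
  Matrix.of fun p q => L (Matrix.of fun x y => M (x, p.2) (y, q.2)) p.1 q.1

/-- A quantum channel: a completely positive trace-preserving linear map. -/
def IsChannel {A B : Type*} [Fintype A] [Fintype B]
    (L : Matrix A A ℂ →ₗ[ℂ] Matrix B B ℂ) : Prop :=
  (∀ (k : ℕ) (M : Matrix (A × Fin k) (A × Fin k) ℂ), M.PosSemidef →
    (extendId L M).PosSemidef) ∧
  (∀ M, (L M).trace = M.trace)

/-- The (unnormalized) maximally entangled projector `|Φ⟩⟨Φ|`,
`|Φ⟩ = ∑ j |j⟩|j⟩`. -/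
def PhiMat (A : Type*) [DecidableEq A] : Matrix (A × A) (A × A) ℂ :=
  Matrix.of fun p q => if p.1 = p.2 ∧ q.1 = q.2 then 1 else 0

/-- The Choi matrix `J(L) = (L ⊗ id)(Φ)`. -/
def choi {A B : Type*} [Fintype A] [DecidableEq A] [Fintype B]
    (L : Matrix A A ℂ →ₗ[ℂ] Matrix B B ℂ) : Matrix (B × A) (B × A) ℂ :=
  extendId L (PhiMat A)

/-- Partial trace over the first tensor factor. -/
def ptraceFst {B R : Type*} [Fintype B] (M : Matrix (B × R) (B × R) ℂ) :
    Matrix R R ℂ :=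
  Matrix.of fun x y => ∑ b, M (b, x) (b, y)

/-- Partial trace over the second tensor factor. -/
def ptraceSnd {B R : Type*} [Fintype R] (M : Matrix (B × R) (B × R) ℂ) :
    Matrix B B ℂ :=
  Matrix.of fun x y => ∑ r, M (x, r) (y, r)

open Classical in
/-- Functional calculus for Hermitian matrices (junk value `0` for
non-Hermitian matrices): apply `f` to the eigenvalues. -/
def mfun {ι : Type*} [Fintype ι] [DecidableEq ι] (f : ℝ → ℝ) (M : Matrix ι ι ℂ) :
    Matrix ι ι ℂ :=
  if h : M.IsHermitian then
    (h.eigenvectorUnitary : Matrix ι ι ℂ) *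
      Matrix.diagonal (fun i => (f (h.eigenvalues i) : ℂ)) *
      star (h.eigenvectorUnitary : Matrix ι ι ℂ)
  else 0

/-- Matrix square root (of a positive semidefinite matrix). -/
def msqrt {ι : Type*} [Fintype ι] [DecidableEq ι] (M : Matrix ι ι ℂ) : Matrix ι ι ℂ :=
  mfun Real.sqrt M

open Classical in
/-- Moore–Penrose pseudo-inverse square root of a positive semidefinite matrix. -/
def minvsqrt {ι : Type*} [Fintype ι] [DecidableEq ι] (M : Matrix ι ι ℂ) : Matrix ι ι ℂ :=
  mfun (fun x => if x = 0 then 0 else (Real.sqrt x)⁻¹) M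

open Classical in
/-- Orthogonal projector onto the support. -/
def suppProj {ι : Type*} [Fintype ι] [DecidableEq ι] (M : Matrix ι ι ℂ) : Matrix ι ι ℂ :=
  mfun (fun x => if x = 0 then 0 else 1) M

/-- Matrix logarithm, taken spectrally on the support (`log 0 := 0`). -/
def mlog {ι : Type*} [Fintype ι] [DecidableEq ι] (M : Matrix ι ι ℂ) : Matrix ι ι ℂ :=
  mfun Real.log M

/-- `M log M`, defined spectrally with `0 log 0 := 0`. -/
def xlogx {ι : Type*} [Fintype ι] [DecidableEq ι] (M : Matrix ι ι ℂ) : Matrix ι ι ℂ :=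
  mfun (fun x => x * Real.log x) M

/-- Matrix exponential (of a Hermitian matrix). -/
def mexp {ι : Type*} [Fintype ι] [DecidableEq ι] (M : Matrix ι ι ℂ) : Matrix ι ι ℂ :=
  mfun Real.exp M

open Classical in
/-- Von Neumann entropy `S(ρ) = -∑ λᵢ log λᵢ` (junk value `0` for
non-Hermitian matrices); `0 log 0 := 0` since `Real.log 0 = 0`. -/
def vnEntropy {ι : Type*} [Fintype ι] [DecidableEq ι] (M : Matrix ι ι ℂ) : ℝ :=
  if h : M.IsHermitian then -∑ i, h.eigenvalues i * Real.log (h.eigenvalues i) else 0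

/-- Conditional entropy `S(B|R)_τ = S(τ) - S(tr_B τ)`. -/
def condEntropy {B R : Type*} [Fintype B] [Fintype R] [DecidableEq B] [DecidableEq R]
    (τ : Matrix (B × R) (B × R) ℂ) : ℝ :=
  vnEntropy τ - vnEntropy (ptraceFst τ)

/-- The channel entropy `S(N) = min_{ρ_{AR}} S(B|R)_{(N ⊗ id)(ρ_{AR})}`. -/
def channelEntropy {A B : Type*} [Fintype A] [Fintype B] [DecidableEq A] [DecidableEq B]
    (L : Matrix A A ℂ →ₗ[ℂ] Matrix B B ℂ) : ℝ :=
  sInf {x | ∃ ρ : Matrix (A × A) (A × A) ℂ, IsDensity ρ ∧ x = condEntropy (extendId L ρ)}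

/-- The pure state `|φ⟩⟨φ|` with `|φ⟩ = φ_R^{1/2} |Φ_{A:R}⟩`, the square root
acting on the reference factor `R`. -/
def stateAR {A : Type*} [Fintype A] [DecidableEq A] (φR : Matrix A A ℂ) :
    Matrix (A × A) (A × A) ℂ :=
  ((1 : Matrix A A ℂ) ⊗ₖ msqrt φR) * PhiMat A * ((1 : Matrix A A ℂ) ⊗ₖ msqrt φR)

/-- A channel is feasible if it reproduces the prescribed expectation values
`tr[C^j J(N)] = q_j`. -/
def Feasible {dA dB J : ℕ} (C : Fin J → Matrix (Fin dB × Fin dA) (Fin dB × Fin dA) ℂ)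
    (q : Fin J → ℝ) (L : Mat dA →ₗ[ℂ] Mat dB) : Prop :=
  IsChannel L ∧ ∀ j, (C j * choi L).trace = (q j : ℂ)

/-- A thermal quantum channel: an optimizer of the maximum channel entropy
problem. -/
def IsThermalChannel {dA dB J : ℕ}
    (C : Fin J → Matrix (Fin dB × Fin dA) (Fin dB × Fin dA) ℂ) (q : Fin J → ℝ)
    (T : Mat dA →ₗ[ℂ] Mat dB) : Prop :=
  Feasible C q T ∧ ∀ L, Feasible C q L → channelEntropy L ≤ channelEntropy T


/-- `T` is an optimizer of the thermal-channel problem with respect to the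
fixed input state `φ_R`. -/
def OptimalFor {dA dB J : ℕ}
    (C : Fin J → Matrix (Fin dB × Fin dA) (Fin dB × Fin dA) ℂ) (q : Fin J → ℝ)
    (φR : Mat dA) (T : Mat dA →ₗ[ℂ] Mat dB) : Prop :=
  Feasible C q T ∧ ∀ N, Feasible C q N →
    condEntropy (extendId N (stateAR φR)) ≤ condEntropy (extendId T (stateAR φR))


section Auxiliary
open Filter Polynomial

/-! ### Spectral calculus toolkit -/

lemma unitary_rel1 {ι : Type*} [Fintype ι] [DecidableEq ι] {M : Matrix ι ι ℂ}
    (h : M.IsHermitian) :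
    (h.eigenvectorUnitary : Matrix ι ι ℂ) * star (h.eigenvectorUnitary : Matrix ι ι ℂ) = 1 :=
  Unitary.mul_star_self_of_mem h.eigenvectorUnitary.2

lemma unitary_rel2 {ι : Type*} [Fintype ι] [DecidableEq ι] {M : Matrix ι ι ℂ}
    (h : M.IsHermitian) :
    star (h.eigenvectorUnitary : Matrix ι ι ℂ) * (h.eigenvectorUnitary : Matrix ι ι ℂ) = 1 :=
  Unitary.star_mul_self_of_mem h.eigenvectorUnitary.2

lemma conj_poly {ι : Type*} [Fintype ι] [DecidableEq ι] (U : Matrix ι ι ℂ)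
    (hU1 : U * star U = 1) (hU2 : star U * U = 1) (lam : ι → ℝ) (p : ℝ[X]) :
    Polynomial.aeval (U * Matrix.diagonal (fun i => ((lam i : ℝ) : ℂ)) * star U) p
      = U * Matrix.diagonal (fun i => ((p.eval (lam i) : ℝ) : ℂ)) * star U := by
  induction p using Polynomial.induction_on with
  | C a =>
      have hd : Matrix.diagonal (fun _ : ι => ((a:ℝ):ℂ)) = ((a:ℂ)) • (1 : Matrix ι ι ℂ) := by
        ext i j; by_cases hij : i = j <;> simp [Matrix.diagonal_apply, Matrix.one_apply, hij]
      simp only [aeval_C, eval_C, hd]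
      rw [Matrix.mul_smul, Matrix.smul_mul, mul_one, hU1,
        Algebra.algebraMap_eq_smul_one, ← Complex.coe_algebraMap, algebraMap_smul]
  | add p q hp hq =>
      have hd : Matrix.diagonal (fun i => ((p.eval (lam i) : ℝ):ℂ)) +
          Matrix.diagonal (fun i => ((q.eval (lam i) : ℝ):ℂ)) =
          Matrix.diagonal (fun i => (((p+q).eval (lam i) : ℝ):ℂ)) := by
        rw [Matrix.diagonal_add]; congr 1; funext i; push_cast [eval_add]; ring
      simp only [map_add, hp, hq]
      rw [← Matrix.add_mul, ← Matrix.mul_add, hd]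
  | monomial n a ih =>
      have hX : Polynomial.aeval (U * Matrix.diagonal (fun i => ((lam i : ℝ) : ℂ)) * star U)
            ((Polynomial.C a) * Polynomial.X ^ (n+1))
          = Polynomial.aeval (U * Matrix.diagonal (fun i => ((lam i : ℝ) : ℂ)) * star U)
            ((Polynomial.C a) * Polynomial.X ^ n) *
            (U * Matrix.diagonal (fun i => ((lam i : ℝ) : ℂ)) * star U) := by
        simp [pow_succ, mul_assoc]
      rw [hX, ih]
      simp only [Matrix.mul_assoc]
      rw [← Matrix.mul_assoc (star U) U, hU2, Matrix.one_mul,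
        ← Matrix.mul_assoc (Matrix.diagonal _) (Matrix.diagonal _), Matrix.diagonal_mul_diagonal]
      have hfun : (fun i => ((((C a * X ^ n).eval (lam i) : ℝ):ℂ) * ((lam i : ℝ):ℂ)))
          = fun i => (((C a * X ^ (n+1)).eval (lam i) : ℝ):ℂ) := by
        funext i
        push_cast [eval_mul, eval_pow, eval_C, eval_X]
        ring
      rw [hfun]

lemma aeval_spectral {ι : Type*} [Fintype ι] [DecidableEq ι] {M : Matrix ι ι ℂ}
    (h : M.IsHermitian) (p : ℝ[X]) :
    Polynomial.aeval M p = (h.eigenvectorUnitary : Matrix ι ι ℂ) *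
      Matrix.diagonal (fun i => ((p.eval (h.eigenvalues i) : ℝ) : ℂ)) *
      star (h.eigenvectorUnitary : Matrix ι ι ℂ) := by
  conv_lhs => rw [h.spectral_theorem]
  exact conj_poly _ (unitary_rel1 h) (unitary_rel2 h) h.eigenvalues p

lemma trace_aeval {ι : Type*} [Fintype ι] [DecidableEq ι] {M : Matrix ι ι ℂ}
    (h : M.IsHermitian) (p : ℝ[X]) :
    (Polynomial.aeval M p).trace = ((∑ i, p.eval (h.eigenvalues i) : ℝ) : ℂ) := by
  rw [aeval_spectral h p, Matrix.trace_mul_cycle, unitary_rel2 h, Matrix.one_mul,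
    Matrix.trace_diagonal]
  push_cast
  rfl

lemma sum_sq_eigenvalues {ι : Type*} [Fintype ι] [DecidableEq ι] {M : Matrix ι ι ℂ}
    (h : M.IsHermitian) :
    ∑ i, (h.eigenvalues i)^2 = (M * M).trace.re := by
  have h2 : (M * M).trace = ((∑ i, (h.eigenvalues i)^2 : ℝ) : ℂ) := by
    have := trace_aeval h (Polynomial.X ^ 2)
    simpa [pow_two] using this
  rw [h2, Complex.ofReal_re]

lemma eig_abs_le {ι : Type*} [Fintype ι] [DecidableEq ι] {M : Matrix ι ι ℂ}
    (h : M.IsHermitian) {B : ℝ} (hB : (M*M).trace.re ≤ B) (i : ι) :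
    |h.eigenvalues i| ≤ Real.sqrt B := by
  have h1 : (h.eigenvalues i)^2 ≤ B := by
    refine le_trans ?_ (le_trans (le_of_eq (sum_sq_eigenvalues h)) hB)
    exact Finset.single_le_sum (f := fun j => (h.eigenvalues j)^2)
      (fun j _ => sq_nonneg _) (Finset.mem_univ i)
  calc |h.eigenvalues i| = Real.sqrt ((h.eigenvalues i)^2) := (Real.sqrt_sq_eq_abs _).symm
    _ ≤ Real.sqrt B := Real.sqrt_le_sqrt h1

lemma unitary_entry_le {ι : Type*} [Fintype ι] [DecidableEq ι] {U : Matrix ι ι ℂ}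
    (hU1 : U * star U = 1) (x j : ι) : ‖U x j‖ ≤ 1 := by
  have h1 : (U * star U) x x = 1 := by rw [hU1]; simp [Matrix.one_apply]
  rw [Matrix.mul_apply] at h1
  have h2 : ∀ k, U x k * (star U) k x = ((Complex.normSq (U x k) : ℝ) : ℂ) := by
    intro k
    have : (star U) k x = star (U x k) := rfl
    rw [this, ← Complex.mul_conj]
    rfl
  rw [Finset.sum_congr rfl (fun k _ => h2 k), ← Complex.ofReal_sum] at h1
  have h3 : (∑ k, Complex.normSq (U x k)) = 1 := by exact_mod_cast h1
  have h4 : Complex.normSq (U x j) ≤ 1 := by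
    rw [← h3]
    exact Finset.single_le_sum (f := fun k => Complex.normSq (U x k))
      (fun k _ => Complex.normSq_nonneg _) (Finset.mem_univ j)
  rw [Complex.norm_def]
  exact Real.sqrt_le_one.mpr h4

lemma conj_entry_bound {ι : Type*} [Fintype ι] [DecidableEq ι] {U : Matrix ι ι ℂ}
    (hU1 : U * star U = 1) (d : ι → ℝ) {c : ℝ}
    (hc : 0 ≤ c) (hd : ∀ i, |d i| ≤ c) (a b : ι) :
    ‖((U * Matrix.diagonal (fun i => ((d i : ℝ):ℂ)) * star U) a b)‖
      ≤ (Fintype.card ι) * c := by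
  have he : (U * Matrix.diagonal (fun i => ((d i : ℝ):ℂ)) * star U) a b
      = ∑ j, U a j * ((d j : ℝ):ℂ) * star (U b j) := by
    rw [Matrix.mul_apply]
    refine Finset.sum_congr rfl (fun j _ => ?_)
    rw [Matrix.mul_diagonal]
    rfl
  rw [he]
  calc ‖(∑ j, U a j * ((d j : ℝ):ℂ) * star (U b j))‖
      ≤ ∑ j, ‖(U a j * ((d j : ℝ):ℂ) * star (U b j))‖ :=
        norm_sum_le _ _
    _ ≤ ∑ _j : ι, c := by
        refine Finset.sum_le_sum (fun j _ => ?_)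
        rw [norm_mul, norm_mul]
        have h1 := unitary_entry_le hU1 a j
        have h2 := unitary_entry_le hU1 b j
        have h3 : ‖((d j : ℝ):ℂ)‖ ≤ c := by
          rw [Complex.norm_real, Real.norm_eq_abs]; exact hd j
        have h4 : ‖(star (U b j))‖ ≤ 1 := by
          rw [show (star (U b j)) = (starRingEnd ℂ) (U b j) from rfl, Complex.norm_conj]
          exact h2
        calc ‖(U a j)‖ * ‖((d j : ℝ):ℂ)‖ * ‖(star (U b j))‖
            ≤ 1 * c * 1 := by
              refine mul_le_mul (mul_le_mul h1 h3 (norm_nonneg _) zero_le_one) h4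
                (norm_nonneg _) (by linarith)
          _ = c := by ring
    _ = (Fintype.card ι) * c := by
        rw [Finset.sum_const, Finset.card_univ, nsmul_eq_mul]

lemma continuous_matrix_pow {ι : Type*} [Fintype ι] [DecidableEq ι] (k : ℕ) :
    Continuous fun X : Matrix ι ι ℂ => X ^ k := by
  induction k with
  | zero => simpa [pow_zero] using continuous_const
  | succ n ih => simpa [pow_succ] using ih.matrix_mul continuous_id

lemma continuous_aeval {ι : Type*} [Fintype ι] [DecidableEq ι] (p : ℝ[X]) :
    Continuous fun X : Matrix ι ι ℂ => Polynomial.aeval X p := by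
  have h : (fun X : Matrix ι ι ℂ => Polynomial.aeval X p)
      = fun X => ∑ k ∈ Finset.range (p.natDegree+1), p.coeff k • X ^ k := by
    funext X; exact Polynomial.aeval_eq_sum_range X
  rw [h]
  exact continuous_finset_sum _ fun k _ => (continuous_const_smul (p.coeff k)).comp (continuous_matrix_pow k)

open Classical in
/-- Sum of a function of the eigenvalues (junk value `0` off Hermitian matrices). -/
def eigSum {ι : Type*} [Fintype ι] [DecidableEq ι] (f : ℝ → ℝ) (M : Matrix ι ι ℂ) : ℝ :=
  if h : M.IsHermitian then ∑ i, f (h.eigenvalues i) else 0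

lemma eigSum_eq {ι : Type*} [Fintype ι] [DecidableEq ι] {M : Matrix ι ι ℂ}
    (h : M.IsHermitian) (f : ℝ → ℝ) :
    eigSum f M = ∑ i, f (h.eigenvalues i) := dif_pos h

lemma mfun_spectral {ι : Type*} [Fintype ι] [DecidableEq ι] (f : ℝ → ℝ) {M : Matrix ι ι ℂ}
    (h : M.IsHermitian) :
    mfun f M = (h.eigenvectorUnitary : Matrix ι ι ℂ) *
      Matrix.diagonal (fun i => ((f (h.eigenvalues i) : ℝ) : ℂ)) *
      star (h.eigenvectorUnitary : Matrix ι ι ℂ) := dif_pos h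

lemma mfun_isHermitian {ι : Type*} [Fintype ι] [DecidableEq ι] (f : ℝ → ℝ)
    {M : Matrix ι ι ℂ} (h : M.IsHermitian) : (mfun f M).IsHermitian := by
  rw [mfun_spectral f h]
  rw [Matrix.IsHermitian]
  rw [Matrix.conjTranspose_mul, Matrix.conjTranspose_mul, Matrix.diagonal_conjTranspose]
  have h1 : (star ((h.eigenvectorUnitary : Matrix ι ι ℂ)))ᴴ
      = (h.eigenvectorUnitary : Matrix ι ι ℂ) := by
    rw [Matrix.star_eq_conjTranspose, Matrix.conjTranspose_conjTranspose]
  have h2 : star (fun i => ((f (h.eigenvalues i) : ℝ) : ℂ))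
      = fun i => ((f (h.eigenvalues i) : ℝ) : ℂ) := by
    funext i
    simp [Pi.star_apply, Complex.conj_ofReal]
  rw [h1, h2, Matrix.star_eq_conjTranspose, Matrix.mul_assoc]

/-! ### Limit lemmas for matrices -/

lemma tendsto_entry {α : Type*} {l : Filter α} {m n : Type*} [Fintype m] [Fintype n]
    {F : α → Matrix m n ℂ} {M : Matrix m n ℂ} (h : Tendsto F l (nhds M)) (a : m) (b : n) :
    Tendsto (fun x => F x a b) l (nhds (M a b)) :=
  ((Continuous.matrix_elem continuous_id a b).tendsto M).comp h

lemma tendsto_matrix_of_entries {α : Type*} {l : Filter α} {m n : Type*} [Fintype m] [Fintype n]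
    {F : α → Matrix m n ℂ} {M : Matrix m n ℂ}
    (h : ∀ a b, Tendsto (fun x => F x a b) l (nhds (M a b))) : Tendsto F l (nhds M) :=
  tendsto_pi_nhds.mpr fun a => tendsto_pi_nhds.mpr fun b => h a b

lemma tendsto_matrix_mul {α : Type*} {l : Filter α} {m n p : Type*} [Fintype m] [Fintype n]
    [Fintype p] {F : α → Matrix m n ℂ} {G : α → Matrix n p ℂ}
    {M : Matrix m n ℂ} {N : Matrix n p ℂ}
    (hF : Tendsto F l (nhds M)) (hG : Tendsto G l (nhds N)) :
    Tendsto (fun x => F x * G x) l (nhds (M * N)) := by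
  refine tendsto_matrix_of_entries (fun a b => ?_)
  have he : ∀ x, (F x * G x) a b = ∑ j, F x a j * G x j b := fun x => Matrix.mul_apply
  simp only [he, Matrix.mul_apply]
  exact tendsto_finset_sum _ fun j _ => (tendsto_entry hF a j).mul (tendsto_entry hG j b)

lemma isHermitian_of_tendsto {α : Type*} {l : Filter α} [l.NeBot] {ι : Type*} [Fintype ι]
    [DecidableEq ι] {F : α → Matrix ι ι ℂ} {M : Matrix ι ι ℂ}
    (hF : ∀ᶠ x in l, (F x).IsHermitian) (hlim : Tendsto F l (nhds M)) : M.IsHermitian := by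
  have h1 : Tendsto (fun x => (F x)ᴴ) l (nhds Mᴴ) :=
    ((continuous_id.matrix_conjTranspose).tendsto M).comp hlim
  have h2 : Tendsto (fun x => (F x)ᴴ) l (nhds M) :=
    hlim.congr' (hF.mono fun x hx => hx.symm)
  exact tendsto_nhds_unique h1 h2

lemma posSemidef_of_tendsto {α : Type*} {l : Filter α} [l.NeBot] {ι : Type*} [Fintype ι]
    [DecidableEq ι] {F : α → Matrix ι ι ℂ} {M : Matrix ι ι ℂ}
    (hF : ∀ᶠ x in l, (F x).PosSemidef) (hlim : Tendsto F l (nhds M)) : M.PosSemidef := by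
  refine Matrix.PosSemidef.of_dotProduct_mulVec_nonneg
    (isHermitian_of_tendsto (hF.mono fun x hx => hx.1) hlim) fun v => ?_
  have hc : Continuous fun X : Matrix ι ι ℂ => dotProduct (star v) (X *ᵥ v) :=
    Continuous.dotProduct continuous_const (continuous_id.matrix_mulVec continuous_const)
  have hq : Tendsto (fun x => dotProduct (star v) (F x *ᵥ v)) l
      (nhds (dotProduct (star v) (M *ᵥ v))) := (hc.tendsto M).comp hlim
  rw [Complex.le_def]
  constructor
  · have hre : Tendsto (fun x => (dotProduct (star v) (F x *ᵥ v)).re) l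
        (nhds ((dotProduct (star v) (M *ᵥ v)).re)) :=
      (Complex.continuous_re.tendsto _).comp hq
    have hge : ∀ᶠ x in l, (0:ℝ) ≤ (dotProduct (star v) (F x *ᵥ v)).re :=
      hF.mono fun x hx => (Complex.le_def.mp (hx.dotProduct_mulVec_nonneg v)).1
    simpa using le_of_tendsto_of_tendsto tendsto_const_nhds hre hge
  · have him : Tendsto (fun x => (dotProduct (star v) (F x *ᵥ v)).im) l
        (nhds ((dotProduct (star v) (M *ᵥ v)).im)) :=
      (Complex.continuous_im.tendsto _).comp hq
    have h0 : Tendsto (fun x => (dotProduct (star v) (F x *ᵥ v)).im) l (nhds 0) := by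
      refine tendsto_const_nhds.congr' (hF.mono fun x hx => ?_)
      simpa using (Complex.le_def.mp (hx.dotProduct_mulVec_nonneg v)).2
    simpa using tendsto_nhds_unique h0 him

/-! ### Continuity of spectral functions -/

lemma spec_setup {ι : Type*} [Fintype ι] [DecidableEq ι] {α : Type*} {l : Filter α}
    {F : α → Matrix ι ι ℂ} {M : Matrix ι ι ℂ}
    (hM : M.IsHermitian) (hlim : Tendsto F l (nhds M)) :
    ∃ R : ℝ, (∀ i, hM.eigenvalues i ∈ Set.Icc (-R) R) ∧
      (∀ᶠ x in l, ∀ h' : (F x).IsHermitian, ∀ i, h'.eigenvalues i ∈ Set.Icc (-R) R) := by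
  set B := (M * M).trace.re + 1 with hB
  have hRB : (M*M).trace.re ≤ B := by rw [hB]; linarith
  refine ⟨Real.sqrt B, fun i => Set.mem_Icc.mpr (abs_le.mp (eig_abs_le hM hRB i)), ?_⟩
  have hco : Continuous fun X : Matrix ι ι ℂ => (X * X).trace.re :=
    Complex.continuous_re.comp ((continuous_id.matrix_mul continuous_id).matrix_trace)
  have h2 : ∀ᶠ x in l, ((F x) * (F x)).trace.re ≤ B := by
    refine ((hco.tendsto M).comp hlim).eventually (eventually_le_nhds ?_)
    rw [hB]; linarith
  exact h2.mono fun x hx h' i => Set.mem_Icc.mpr (abs_le.mp (eig_abs_le h' hx i))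

lemma tendsto_eigSum {ι : Type*} [Fintype ι] [DecidableEq ι] {α : Type*} {l : Filter α}
    {F : α → Matrix ι ι ℂ} {M : Matrix ι ι ℂ}
    (hM : M.IsHermitian) (hF : ∀ᶠ x in l, (F x).IsHermitian)
    (hlim : Tendsto F l (nhds M)) {f : ℝ → ℝ} (hf : Continuous f) :
    Tendsto (fun x => eigSum f (F x)) l (nhds (eigSum f M)) := by
  obtain ⟨R, hMspec, hFspec⟩ := spec_setup hM hlim
  rw [Metric.tendsto_nhds]
  intro ε hε
  set n := Fintype.card ι with hn
  set ε' := ε / (2 * (n:ℝ) + 2) with hε'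
  have hε'0 : 0 < ε' := by positivity
  obtain ⟨p, hp⟩ := exists_polynomial_near_of_continuousOn (-R) R f hf.continuousOn ε' hε'0
  have hcont : Continuous fun X : Matrix ι ι ℂ => ((Polynomial.aeval X p).trace).re :=
    Complex.continuous_re.comp ((continuous_aeval p).matrix_trace)
  have hSp := (hcont.tendsto M).comp hlim
  rw [Metric.tendsto_nhds] at hSp
  have key : ∀ {N : Matrix ι ι ℂ} (hN : N.IsHermitian),
      (∀ i, hN.eigenvalues i ∈ Set.Icc (-R) R) →
      |∑ i, f (hN.eigenvalues i) - (Polynomial.aeval N p).trace.re| ≤ n * ε' := by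
    intro N hN hspec
    have ht : (Polynomial.aeval N p).trace.re = ∑ i, p.eval (hN.eigenvalues i) := by
      rw [trace_aeval hN, Complex.ofReal_re]
    rw [ht, ← Finset.sum_sub_distrib]
    calc |∑ i, (f (hN.eigenvalues i) - p.eval (hN.eigenvalues i))|
        ≤ ∑ i, |f (hN.eigenvalues i) - p.eval (hN.eigenvalues i)| :=
          Finset.abs_sum_le_sum_abs _ _
      _ ≤ ∑ _i : ι, ε' := by
          refine Finset.sum_le_sum (fun i _ => le_of_lt ?_)
          have := hp _ (hspec i)
          rwa [abs_sub_comm] at this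
      _ = n * ε' := by rw [Finset.sum_const, Finset.card_univ, nsmul_eq_mul]
  filter_upwards [hF, hSp ε' hε'0, hFspec] with x hx hd hs
  rw [eigSum_eq hx, eigSum_eq hM, Real.dist_eq]
  rw [Real.dist_eq] at hd
  simp only [Function.comp_apply] at hd
  have k1 := key hx (hs hx)
  have k2 := key hM hMspec
  have htri : |∑ i, f (hx.eigenvalues i) - ∑ i, f (hM.eigenvalues i)|
      ≤ |∑ i, f (hx.eigenvalues i) - (Polynomial.aeval (F x) p).trace.re|
        + |(Polynomial.aeval (F x) p).trace.re - (Polynomial.aeval M p).trace.re|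
        + |(Polynomial.aeval M p).trace.re - ∑ i, f (hM.eigenvalues i)| := by
    calc |∑ i, f (hx.eigenvalues i) - ∑ i, f (hM.eigenvalues i)|
        ≤ |∑ i, f (hx.eigenvalues i) - (Polynomial.aeval M p).trace.re|
          + |(Polynomial.aeval M p).trace.re - ∑ i, f (hM.eigenvalues i)| := abs_sub_le _ _ _
      _ ≤ (|∑ i, f (hx.eigenvalues i) - (Polynomial.aeval (F x) p).trace.re|
          + |(Polynomial.aeval (F x) p).trace.re - (Polynomial.aeval M p).trace.re|)
          + |(Polynomial.aeval M p).trace.re - ∑ i, f (hM.eigenvalues i)| := by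
          gcongr
          exact abs_sub_le _ _ _
  have k2' : |(Polynomial.aeval M p).trace.re - ∑ i, f (hM.eigenvalues i)| ≤ n * ε' := by
    rwa [abs_sub_comm] at k2
  have hfin : (n:ℝ) * ε' + ε' + n * ε' < ε := by
    have h1 : (2 * (n:ℝ) + 2) * ε' = ε := by
      rw [hε']; field_simp
    nlinarith
  linarith [htri, k1, k2', hd]

lemma tendsto_mfun {ι : Type*} [Fintype ι] [DecidableEq ι] {α : Type*} {l : Filter α}
    {F : α → Matrix ι ι ℂ} {M : Matrix ι ι ℂ}
    (hM : M.IsHermitian) (hF : ∀ᶠ x in l, (F x).IsHermitian)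
    (hlim : Tendsto F l (nhds M)) {f : ℝ → ℝ} (hf : Continuous f) :
    Tendsto (fun x => mfun f (F x)) l (nhds (mfun f M)) := by
  obtain ⟨R, hMspec, hFspec⟩ := spec_setup hM hlim
  refine tendsto_pi_nhds.mpr fun a => tendsto_pi_nhds.mpr fun b => ?_
  rw [Metric.tendsto_nhds]
  intro ε hε
  set n := Fintype.card ι with hn
  set ε' := ε / (2 * (n:ℝ) + 2) with hε'
  have hε'0 : 0 < ε' := by positivity
  obtain ⟨p, hp⟩ := exists_polynomial_near_of_continuousOn (-R) R f hf.continuousOn ε' hε'0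
  have hcont : Continuous fun X : Matrix ι ι ℂ => (Polynomial.aeval X p) a b :=
    Continuous.matrix_elem (continuous_aeval p) a b
  have hSp := (hcont.tendsto M).comp hlim
  rw [Metric.tendsto_nhds] at hSp
  have key : ∀ {N : Matrix ι ι ℂ} (hN : N.IsHermitian),
      (∀ i, hN.eigenvalues i ∈ Set.Icc (-R) R) →
      ‖((mfun f N) a b - (Polynomial.aeval N p) a b)‖ ≤ n * ε' := by
    intro N hN hspec
    have hdiff : (mfun f N) a b - (Polynomial.aeval N p) a b
        = ((hN.eigenvectorUnitary : Matrix ι ι ℂ) *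
            Matrix.diagonal
              (fun i => ((f (hN.eigenvalues i) - p.eval (hN.eigenvalues i) : ℝ) : ℂ)) *
            star (hN.eigenvectorUnitary : Matrix ι ι ℂ)) a b := by
      rw [mfun_spectral f hN, aeval_spectral hN]
      rw [show ((fun i => ((f (hN.eigenvalues i) - p.eval (hN.eigenvalues i) : ℝ) : ℂ)))
          = fun i => ((f (hN.eigenvalues i) : ℝ) : ℂ) - ((p.eval (hN.eigenvalues i) : ℝ) : ℂ) by
        funext i; push_cast; ring]
      rw [← Matrix.diagonal_sub, Matrix.mul_sub, Matrix.sub_mul]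
      rfl
    rw [hdiff]
    refine conj_entry_bound (unitary_rel1 hN) _ (le_of_lt hε'0) (fun i => le_of_lt ?_) a b
    have := hp _ (hspec i)
    rwa [abs_sub_comm] at this
  filter_upwards [hF, hSp ε' hε'0, hFspec] with x hx hd hs
  rw [Complex.dist_eq]
  rw [Complex.dist_eq] at hd
  simp only [Function.comp_apply] at hd
  have k1 := key hx (hs hx)
  have k2 := key hM hMspec
  have htri : ‖(mfun f (F x) a b - mfun f M a b)‖
      ≤ ‖(mfun f (F x) a b - (Polynomial.aeval (F x) p) a b)‖
        + ‖((Polynomial.aeval (F x) p) a b - (Polynomial.aeval M p) a b)‖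
        + ‖((Polynomial.aeval M p) a b - mfun f M a b)‖ := by
    have e1 : mfun f (F x) a b - mfun f M a b
        = (mfun f (F x) a b - (Polynomial.aeval (F x) p) a b)
          + ((Polynomial.aeval (F x) p) a b - (Polynomial.aeval M p) a b)
          + ((Polynomial.aeval M p) a b - mfun f M a b) := by ring
    rw [e1]
    exact le_trans (norm_add_le _ _) (by gcongr; exact norm_add_le _ _)
  have k2' : ‖((Polynomial.aeval M p) a b - mfun f M a b)‖ ≤ n * ε' := by
    rw [← norm_neg]
    simpa using k2
  have hfin : (n:ℝ) * ε' + ε' + n * ε' < ε := by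
    have h1 : (2 * (n:ℝ) + 2) * ε' = ε := by rw [hε']; field_simp
    nlinarith
  linarith [htri, k1, k2', hd]

/-! ### Choi matrix lemmas -/

lemma choi_apply {A B : Type*} [Fintype A] [DecidableEq A] [Fintype B]
    (L : Matrix A A ℂ →ₗ[ℂ] Matrix B B ℂ) (a a' : A) (x y : B) :
    choi L (x, a) (y, a') = L (Matrix.single a a' 1) x y := by
  show L (Matrix.of fun u v => PhiMat A (u, a) (v, a')) x y = _
  have he : (Matrix.of fun u v => PhiMat A (u, a) (v, a')) = Matrix.single a a' 1 := by
    ext u v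
    simp only [Matrix.of_apply, PhiMat, Matrix.single]
    exact if_congr (and_congr eq_comm eq_comm) rfl rfl
  rw [he]

lemma apply_eq_sum_choi {A B : Type*} [Fintype A] [DecidableEq A] [Fintype B]
    (L : Matrix A A ℂ →ₗ[ℂ] Matrix B B ℂ) (M : Matrix A A ℂ) (x y : B) :
    L M x y = ∑ a, ∑ a', M a a' * choi L (x, a) (y, a') := by
  have hL : L M = ∑ a, ∑ a', M a a' • L (Matrix.single a a' 1) := by
    conv_lhs => rw [Matrix.matrix_eq_sum_single M]
    rw [map_sum]
    refine Finset.sum_congr rfl fun a _ => ?_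
    rw [map_sum]
    refine Finset.sum_congr rfl fun a' _ => ?_
    rw [← _root_.map_smul]
    congr 1
    rw [Matrix.smul_single, smul_eq_mul, mul_one]
  rw [hL]
  simp only [Matrix.sum_apply, Matrix.smul_apply, smul_eq_mul]
  exact Finset.sum_congr rfl fun a _ => Finset.sum_congr rfl fun a' _ => by rw [choi_apply]

lemma extendId_apply_choi {A B R : Type*} [Fintype A] [DecidableEq A] [Fintype B] [Fintype R]
    (L : Matrix A A ℂ →ₗ[ℂ] Matrix B B ℂ)
    (M : Matrix (A × R) (A × R) ℂ) (p q : B × R) :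
    extendId L M p q = ∑ a, ∑ a', M (a, p.2) (a', q.2) * choi L (p.1, a) (q.1, a') :=
  apply_eq_sum_choi L _ p.1 q.1

lemma tendsto_extendId {A B : Type*} [Fintype A] [DecidableEq A] [Fintype B]
    {α : Type*} {l : Filter α} {R : Type*} [Fintype R]
    {Lz : α → (Matrix A A ℂ →ₗ[ℂ] Matrix B B ℂ)} {L : Matrix A A ℂ →ₗ[ℂ] Matrix B B ℂ}
    {Mz : α → Matrix (A × R) (A × R) ℂ} {M : Matrix (A × R) (A × R) ℂ}
    (hL : Tendsto (fun x => choi (Lz x)) l (nhds (choi L)))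
    (hM : Tendsto Mz l (nhds M)) :
    Tendsto (fun x => extendId (Lz x) (Mz x)) l (nhds (extendId L M)) := by
  refine tendsto_matrix_of_entries (fun p q => ?_)
  simp only [extendId_apply_choi]
  refine tendsto_finset_sum _ fun a _ => tendsto_finset_sum _ fun a' _ => ?_
  exact (tendsto_entry hM _ _).mul (tendsto_entry hL _ _)

lemma tendsto_apply_of_choi {A B : Type*} [Fintype A] [DecidableEq A] [Fintype B]
    {α : Type*} {l : Filter α}
    {Lz : α → (Matrix A A ℂ →ₗ[ℂ] Matrix B B ℂ)} {L : Matrix A A ℂ →ₗ[ℂ] Matrix B B ℂ}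
    (hL : Tendsto (fun x => choi (Lz x)) l (nhds (choi L))) (M : Matrix A A ℂ) :
    Tendsto (fun x => Lz x M) l (nhds (L M)) := by
  refine tendsto_matrix_of_entries (fun x y => ?_)
  simp only [apply_eq_sum_choi _ M]
  refine tendsto_finset_sum _ fun a _ => tendsto_finset_sum _ fun a' _ => ?_
  exact tendsto_const_nhds.mul (tendsto_entry hL _ _)

/-! ### The input state -/

lemma PhiMat_posSemidef {A : Type*} [Fintype A] [DecidableEq A] : (PhiMat A).PosSemidef := by
  refine Matrix.PosSemidef.of_dotProduct_mulVec_nonneg ?_ ?_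
  · show (PhiMat A)ᴴ = PhiMat A
    ext p q
    simp only [Matrix.conjTranspose_apply, PhiMat, Matrix.of_apply]
    by_cases h1 : p.1 = p.2 <;> by_cases h2 : q.1 = q.2 <;>
      simp [h1, h2, and_comm]
  · intro v
    set s := ∑ q : A × A, (if q.1 = q.2 then v q else 0) with hs
    have hmv : ∀ p : A × A, (PhiMat A *ᵥ v) p = if p.1 = p.2 then s else 0 := by
      intro p
      rw [Matrix.mulVec, dotProduct]
      by_cases h : p.1 = p.2
      · simp only [PhiMat, Matrix.of_apply, h, true_and, if_true, hs]
        exact Finset.sum_congr rfl fun q _ => by by_cases hq : q.1 = q.2 <;> simp [hq]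
      · simp only [PhiMat, Matrix.of_apply, h, false_and, if_false, zero_mul]
        simp
    have hdot : dotProduct (star v) (PhiMat A *ᵥ v) = star s * s := by
      rw [dotProduct]
      have h1 : ∀ p : A × A, star v p * (PhiMat A *ᵥ v) p
          = (if p.1 = p.2 then star (v p) else 0) * s := by
        intro p
        rw [hmv p]
        by_cases h : p.1 = p.2 <;> simp [h]
      rw [Finset.sum_congr rfl fun p _ => h1 p, ← Finset.sum_mul]
      congr 1
      rw [hs, star_sum]
      exact Finset.sum_congr rfl fun p _ => by by_cases h : p.1 = p.2 <;> simp [h]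
    rw [hdot]
    exact star_mul_self_nonneg s

lemma kron_one_isHermitian {A : Type*} [Fintype A] [DecidableEq A] {S : Matrix A A ℂ}
    (hS : S.IsHermitian) : ((1 : Matrix A A ℂ) ⊗ₖ S).IsHermitian := by
  show ((1 : Matrix A A ℂ) ⊗ₖ S)ᴴ = (1 : Matrix A A ℂ) ⊗ₖ S
  ext p q
  simp only [Matrix.conjTranspose_apply, Matrix.kroneckerMap_apply]
  rw [star_mul']
  have h1 : star ((1 : Matrix A A ℂ) q.1 p.1) = (1 : Matrix A A ℂ) p.1 q.1 := by
    by_cases h : q.1 = p.1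
    · simp [Matrix.one_apply, h, eq_comm]
    · have h' : ¬ p.1 = q.1 := fun hh => h hh.symm
      simp [Matrix.one_apply, h, h']
  have h2 : star (S q.2 p.2) = S p.2 q.2 := congrFun (congrFun hS.eq p.2) q.2
  rw [mul_comm, h1, h2]
  ring

lemma stateAR_posSemidef {A : Type*} [Fintype A] [DecidableEq A] {φ : Matrix A A ℂ}
    (hφ : φ.IsHermitian) : (stateAR φ).PosSemidef := by
  have hs : (msqrt φ).IsHermitian := mfun_isHermitian Real.sqrt hφ
  have hk : ((1 : Matrix A A ℂ) ⊗ₖ msqrt φ).IsHermitian := kron_one_isHermitian hs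
  have h := (PhiMat_posSemidef (A := A)).mul_mul_conjTranspose_same
    ((1 : Matrix A A ℂ) ⊗ₖ msqrt φ)
  rw [stateAR]
  rwa [hk.eq] at h

lemma tendsto_stateAR {A : Type*} [Fintype A] [DecidableEq A] {α : Type*} {l : Filter α}
    {φz : α → Matrix A A ℂ} {φ : Matrix A A ℂ}
    (hφ : φ.IsHermitian) (hherm : ∀ᶠ x in l, (φz x).IsHermitian)
    (hlim : Tendsto φz l (nhds φ)) :
    Tendsto (fun x => stateAR (φz x)) l (nhds (stateAR φ)) := by
  have hsq := tendsto_mfun hφ hherm hlim Real.continuous_sqrt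
  have hkron : Tendsto (fun x => (1 : Matrix A A ℂ) ⊗ₖ msqrt (φz x)) l
      (nhds ((1 : Matrix A A ℂ) ⊗ₖ msqrt φ)) := by
    refine tendsto_matrix_of_entries (fun p q => ?_)
    simp only [Matrix.kroneckerMap_apply]
    exact tendsto_const_nhds.mul (tendsto_entry hsq _ _)
  exact tendsto_matrix_mul (tendsto_matrix_mul hkron tendsto_const_nhds) hkron

/-! ### Entropy continuity -/

lemma ptraceFst_isHermitian {B R : Type*} [Fintype B] [Fintype R]
    {M : Matrix (B × R) (B × R) ℂ} (h : M.IsHermitian) : (ptraceFst M).IsHermitian := by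
  show (ptraceFst M)ᴴ = ptraceFst M
  ext x y
  simp only [Matrix.conjTranspose_apply, ptraceFst, Matrix.of_apply, star_sum]
  refine Finset.sum_congr rfl fun b _ => ?_
  exact congrFun (congrFun h.eq (b, x)) (b, y)

lemma tendsto_ptraceFst {B R : Type*} [Fintype B] [Fintype R] {α : Type*} {l : Filter α}
    {F : α → Matrix (B × R) (B × R) ℂ} {M : Matrix (B × R) (B × R) ℂ}
    (h : Tendsto F l (nhds M)) :
    Tendsto (fun x => ptraceFst (F x)) l (nhds (ptraceFst M)) := by
  refine tendsto_matrix_of_entries (fun a b => ?_)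
  show Tendsto (fun x => ∑ i, F x (i, a) (i, b)) l (nhds (∑ i, M (i, a) (i, b)))
  exact tendsto_finset_sum _ fun i _ => tendsto_entry h _ _

lemma vnEntropy_eq_eigSum {ι : Type*} [Fintype ι] [DecidableEq ι] (M : Matrix ι ι ℂ) :
    vnEntropy M = -(eigSum (fun t => t * Real.log t) M) := by
  unfold vnEntropy eigSum
  split_ifs with h
  · rfl
  · simp

lemma tendsto_condEntropy {B R : Type*} [Fintype B] [Fintype R] [DecidableEq B] [DecidableEq R]
    {α : Type*} {l : Filter α} {F : α → Matrix (B × R) (B × R) ℂ}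
    {M : Matrix (B × R) (B × R) ℂ} (hM : M.IsHermitian)
    (hF : ∀ᶠ x in l, (F x).IsHermitian) (hlim : Tendsto F l (nhds M)) :
    Tendsto (fun x => condEntropy (F x)) l (nhds (condEntropy M)) := by
  have h1 : Tendsto (fun x => vnEntropy (F x)) l (nhds (vnEntropy M)) := by
    simp only [vnEntropy_eq_eigSum]
    exact (tendsto_eigSum hM hF hlim Real.continuous_mul_log).neg
  have h2 : Tendsto (fun x => vnEntropy (ptraceFst (F x))) l
      (nhds (vnEntropy (ptraceFst M))) := by
    simp only [vnEntropy_eq_eigSum]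
    exact (tendsto_eigSum (ptraceFst_isHermitian hM)
      (hF.mono fun x hx => ptraceFst_isHermitian hx)
      (tendsto_ptraceFst hlim) Real.continuous_mul_log).neg
  exact h1.sub h2

end Auxiliary

/-- **Limits of fixed-state thermal channels are thermal.**  If full-rank
density matrices `φ_R^z → φ_R` as `z → 0⁺` and the corresponding fixed-state
thermal channels converge (entrywise on the Choi matrices) to a channel `T`,
then `T` is a thermal channel with respect to `φ_R`. -/
theorem limit_of_fixed_state_thermal_channels
    {dA dB J : ℕ}
    (C : Fin J → Matrix (Fin dB × Fin dA) (Fin dB × Fin dA) ℂ)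
    (hC : ∀ j, (C j).IsHermitian) (q : Fin J → ℝ)
    (hfeas : ∃ N, Feasible C q N)
    (φz : ℝ → Mat dA)
    (hφz : ∀ z : ℝ, 0 < z → IsDensity (φz z) ∧ (φz z).PosDef)
    (Tz : ℝ → (Mat dA →ₗ[ℂ] Mat dB))
    (hTz : ∀ z : ℝ, 0 < z → OptimalFor C q (φz z) (Tz z))
    (φR : Mat dA)
    (hφlim : Filter.Tendsto φz (nhdsWithin 0 (Set.Ioi 0)) (nhds φR))
    (T : Mat dA →ₗ[ℂ] Mat dB)
    (hTlim : Filter.Tendsto (fun z => choi (Tz z)) (nhdsWithin 0 (Set.Ioi 0))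
      (nhds (choi T))) :
    OptimalFor C q φR T := by
  classical
  set l := nhdsWithin (0:ℝ) (Set.Ioi 0) with hldef
  haveI : l.NeBot := nhdsGT_neBot 0
  have hev : ∀ᶠ z in l, 0 < z :=
    Filter.eventually_of_mem self_mem_nhdsWithin fun z hz => Set.mem_Ioi.mp hz
  have hermφz : ∀ᶠ z in l, (φz z).IsHermitian := hev.mono fun z hz => ((hφz z hz).2).1
  have hφRherm : φR.IsHermitian := isHermitian_of_tendsto hermφz hφlim
  have hstate : Filter.Tendsto (fun z => stateAR (φz z)) l (nhds (stateAR φR)) :=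
    tendsto_stateAR hφRherm hermφz hφlim
  have hTfeas : Feasible C q T := by
    refine ⟨⟨?_, ?_⟩, ?_⟩
    · intro k M hM
      refine posSemidef_of_tendsto ?_ (tendsto_extendId hTlim tendsto_const_nhds)
      exact hev.mono fun z hz => ((hTz z hz).1.1.1) k M hM
    · intro M
      have h1 : Filter.Tendsto (fun z => ((Tz z) M).trace) l (nhds ((T M).trace)) :=
        ((continuous_id.matrix_trace).tendsto _).comp (tendsto_apply_of_choi hTlim M)
      have h2 : Filter.Tendsto (fun z => ((Tz z) M).trace) l (nhds (M.trace)) :=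
        tendsto_const_nhds.congr' (hev.mono fun z hz => (((hTz z hz).1.1.2) M).symm)
      exact tendsto_nhds_unique h1 h2
    · intro j
      have hc : Continuous
          fun X : Matrix (Fin dB × Fin dA) (Fin dB × Fin dA) ℂ => (C j * X).trace :=
        (continuous_const.matrix_mul continuous_id).matrix_trace
      have h1 : Filter.Tendsto (fun z => (C j * choi (Tz z)).trace) l
          (nhds ((C j * choi T).trace)) := (hc.tendsto _).comp hTlim
      have h2 : Filter.Tendsto (fun z => (C j * choi (Tz z)).trace) l (nhds ((q j : ℂ))) :=
        tendsto_const_nhds.congr' (hev.mono fun z hz => (((hTz z hz).1.2) j).symm)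
      exact tendsto_nhds_unique h1 h2
  refine ⟨hTfeas, fun N hN => ?_⟩
  have hSN : Filter.Tendsto (fun z => extendId N (stateAR (φz z))) l
      (nhds (extendId N (stateAR φR))) :=
    tendsto_extendId tendsto_const_nhds hstate
  have hST : Filter.Tendsto (fun z => extendId (Tz z) (stateAR (φz z))) l
      (nhds (extendId T (stateAR φR))) :=
    tendsto_extendId hTlim hstate
  have hSNherm : ∀ᶠ z in l, (extendId N (stateAR (φz z))).IsHermitian :=
    hermφz.mono fun z hz => (hN.1.1 dA _ (stateAR_posSemidef hz)).1
  have hSTherm : ∀ᶠ z in l, (extendId (Tz z) (stateAR (φz z))).IsHermitian :=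
    (hev.and hermφz).mono fun z hz => ((hTz z hz.1).1.1.1 dA _ (stateAR_posSemidef hz.2)).1
  have hlimNherm : (extendId N (stateAR φR)).IsHermitian :=
    (hN.1.1 dA _ (stateAR_posSemidef hφRherm)).1
  have hlimTherm : (extendId T (stateAR φR)).IsHermitian :=
    (hTfeas.1.1 dA _ (stateAR_posSemidef hφRherm)).1
  have hcN := tendsto_condEntropy hlimNherm hSNherm hSN
  have hcT := tendsto_condEntropy hlimTherm hSTherm hST
  refine le_of_tendsto_of_tendsto hcN hcT ?_
  exact hev.mono fun z hz => (hTz z hz).2 N hN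


end ThermalChannel
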